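/- arXiv:2504.01206 — 9 statements merged into one kernel-verified Lean document; each statement's English description precedes it below -/
import Mathlib

section
/- Let P be a real polynomial of degree at most 3 such that P(0) = 0, P(1) = 1, and P is monotone non-decreasing on the closed interval [0,1]. Then 1/2 - √3/4 ≤ P(1/2) ≤ 1/2 + √3/4. -/
open Filter Set

lemma aux_deriv_nonneg {f : ℝ → ℝ} (hf : MonotoneOn f (Set.Icc (0:ℝ) 1))
    {x d : ℝ} (hx : x ∈ Set.Ico (0:ℝ) 1) (hd : HasDerivAt f d x) : 0 ≤ d := by
  have ht : Filter.Tendsto (slope f x) (nhdsWithin x (Set.Ioi x)) (nhds d) :=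
    (hasDerivAt_iff_tendsto_slope.mp hd).mono_left
      (nhdsWithin_mono x (fun y hy => ne_of_gt hy))
  refine ge_of_tendsto ht ?_
  filter_upwards [Ioo_mem_nhdsGT_of_mem (show x ∈ Set.Ico x 1 from ⟨le_refl x, hx.2⟩)]
    with y hy
  have hfy : f x ≤ f y :=
    hf ⟨hx.1, le_of_lt hx.2⟩ ⟨le_trans hx.1 (le_of_lt hy.1), le_of_lt hy.2⟩ (le_of_lt hy.1)
  rw [slope_def_field]
  exact div_nonneg (sub_nonneg.mpr hfy) (sub_nonneg.mpr (le_of_lt hy.1))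

/-- A real polynomial of degree at most 3 with P(0)=0, P(1)=1,
monotone non-decreasing on [0,1], satisfies 1/2 - √3/4 ≤ P(1/2) ≤ 1/2 + √3/4. -/
theorem stmt_0 (P : Polynomial ℝ) (hdeg : P.degree ≤ 3)
    (h0 : P.eval 0 = 0) (h1 : P.eval 1 = 1)
    (hmono : MonotoneOn (fun x => P.eval x) (Set.Icc (0 : ℝ) 1)) :
    1 / 2 - Real.sqrt 3 / 4 ≤ P.eval (1 / 2) ∧
      P.eval (1 / 2) ≤ 1 / 2 + Real.sqrt 3 / 4 := by
  have hs : Real.sqrt 3 ^ 2 = 3 := Real.sq_sqrt (by norm_num)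
  have hs0 : 0 ≤ Real.sqrt 3 := Real.sqrt_nonneg 3
  have hs1 : 1 ≤ Real.sqrt 3 := by nlinarith
  have hs2 : Real.sqrt 3 ≤ 2 := by nlinarith
  set s := Real.sqrt 3 with hsdef
  have hnd : P.natDegree ≤ 3 := Polynomial.natDegree_le_iff_degree_le.mpr hdeg
  have heval : ∀ x : ℝ,
      P.eval x = P.coeff 0 + P.coeff 1 * x + P.coeff 2 * x ^ 2 + P.coeff 3 * x ^ 3 := by
    intro x
    rw [Polynomial.eval_eq_sum_range' (lt_of_le_of_lt hnd (by norm_num : (3:ℕ) < 4))]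
    simp only [Finset.sum_range_succ, Finset.sum_range_zero]
    ring
  have hc0 : P.coeff 0 = 0 := by rw [Polynomial.coeff_zero_eq_eval_zero]; exact h0
  have hndd : P.derivative.natDegree < 3 := by
    have := Polynomial.natDegree_derivative_le P
    omega
  have hde : ∀ x : ℝ,
      P.derivative.eval x = P.coeff 1 + 2 * P.coeff 2 * x + 3 * P.coeff 3 * x ^ 2 := by
    intro x
    rw [Polynomial.eval_eq_sum_range' hndd]
    simp only [Finset.sum_range_succ, Finset.sum_range_zero, Polynomial.coeff_derivative]
    push_cast
    ring
  have hdnn : ∀ x ∈ Set.Ico (0:ℝ) 1, 0 ≤ P.derivative.eval x := by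
    intro x hx
    exact aux_deriv_nonneg hmono hx (P.hasDerivAt x)
  have hr1 : 0 ≤ P.coeff 1 + 2 * P.coeff 2 * ((3 - s) / 6) + 3 * P.coeff 3 * ((3 - s) / 6) ^ 2 := by
    rw [← hde]
    exact hdnn _ ⟨by nlinarith, by nlinarith⟩
  have hr2 : 0 ≤ P.coeff 1 + 2 * P.coeff 2 * ((3 + s) / 6) + 3 * P.coeff 3 * ((3 + s) / 6) ^ 2 := by
    rw [← hde]
    exact hdnn _ ⟨by nlinarith, by nlinarith⟩
  rw [heval] at h1
  rw [heval, hc0]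
  rw [hc0] at h1
  have key1 : 2 * s * (P.coeff 1 + 2 * P.coeff 2 * ((3 - s) / 6) + 3 * P.coeff 3 * ((3 - s) / 6) ^ 2)
      = 2 * s * (P.coeff 1 + P.coeff 2 + P.coeff 3) - (2 * P.coeff 2 + 3 * P.coeff 3) := by
    linear_combination (-(2 * P.coeff 2) / 3 + P.coeff 3 * (s - 6) / 6) * hs
  have key2 : 2 * s * (P.coeff 1 + 2 * P.coeff 2 * ((3 + s) / 6) + 3 * P.coeff 3 * ((3 + s) / 6) ^ 2)
      = 2 * s * (P.coeff 1 + P.coeff 2 + P.coeff 3) + (2 * P.coeff 2 + 3 * P.coeff 3) := by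
    linear_combination ((2 * P.coeff 2) / 3 + P.coeff 3 * (s + 6) / 6) * hs
  have k1 := mul_nonneg (by linarith : (0:ℝ) ≤ 2 * s) hr1
  have k2 := mul_nonneg (by linarith : (0:ℝ) ≤ 2 * s) hr2
  rw [key1] at k1
  rw [key2] at k2
  constructor
  · nlinarith [k1]
  · nlinarith [k2]
end

section
/- Let P be a real polynomial of degree at most 3 such that P(0) = 0, P(1) = 1, and P is monotone non-decreasing on the closed interval [0,1]. Then P(1/2) ≤ 1/2 + √3/4. -/
open Polynomial Filter Set Topology

lemma deriv_nonneg_of_monotoneOn {f : ℝ → ℝ} (hmono : MonotoneOn f (Set.Icc (0:ℝ) 1))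
    {r : ℝ} (hr0 : 0 ≤ r) (hr1 : r < 1) {d : ℝ} (hd : HasDerivAt f d r) : 0 ≤ d := by
  have htend : Tendsto (slope f r) (𝓝[>] r) (𝓝 d) :=
    (hasDerivAt_iff_tendsto_slope.1 hd).mono_left
      (nhdsWithin_mono _ fun y hy => ne_of_gt hy)
  refine ge_of_tendsto htend ?_
  filter_upwards [Ioo_mem_nhdsGT_of_mem ⟨le_refl r, hr1⟩] with y hy
  have hfy : f r ≤ f y := hmono ⟨hr0, hr1.le⟩ ⟨hr0.trans hy.1.le, hy.2.le⟩ hy.1.le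
  have hyr : 0 < y - r := sub_pos.2 hy.1
  rw [slope_def_field]
  exact div_nonneg (by linarith) hyr.le

/-- upper bound P(1/2) ≤ 1/2 + √3/4. -/
theorem stmt_1 (P : Polynomial ℝ) (hdeg : P.degree ≤ 3)
    (h0 : P.eval 0 = 0) (h1 : P.eval 1 = 1)
    (hmono : MonotoneOn (fun x => P.eval x) (Set.Icc (0 : ℝ) 1)) :
    P.eval (1 / 2) ≤ 1 / 2 + Real.sqrt 3 / 4 := by
  set s := Real.sqrt 3 with hs
  have hs2 : s ^ 2 = 3 := Real.sq_sqrt (by norm_num)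
  have hs0 : 0 < s := Real.sqrt_pos.2 (by norm_num)
  have hs3 : s < 3 := by nlinarith
  set r : ℝ := (3 + s) / 6 with hrdef
  have hr0 : (0:ℝ) ≤ r := by positivity
  have hr1 : r < 1 := by rw [hrdef]; linarith
  have hnd' : P.natDegree ≤ 3 := Polynomial.natDegree_le_iff_degree_le.mpr (by exact_mod_cast hdeg)
  have hnd : P.natDegree < 4 := Nat.lt_succ_of_le hnd'
  set a := P.coeff 3
  set b := P.coeff 2
  set c := P.coeff 1
  set d := P.coeff 0
  have heval : ∀ x : ℝ, P.eval x = d + c * x + b * x ^ 2 + a * x ^ 3 := by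
    intro x
    rw [Polynomial.eval_eq_sum_range' hnd]
    simp [Finset.sum_range_succ]
    try ring
  have hder : HasDerivAt (fun x => P.eval x) (c + 2 * b * r + 3 * a * r ^ 2) r := by
    have hh : HasDerivAt (fun x : ℝ => d + c * x + b * x ^ 2 + a * x ^ 3)
        (c + 2 * b * r + 3 * a * r ^ 2) r := by
      have := (((hasDerivAt_const r d).add ((hasDerivAt_id r).const_mul c)).add
        (((hasDerivAt_pow 2 r)).const_mul b)).add ((hasDerivAt_pow 3 r).const_mul a)
      exact this.congr_deriv (by norm_num; ring)
    exact hh.congr_of_eventuallyEq (Eventually.of_forall fun x => heval x)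
  have hdpos : 0 ≤ c + 2 * b * r + 3 * a * r ^ 2 :=
    deriv_nonneg_of_monotoneOn hmono hr0 hr1 hder
  have e0 : d = 0 := by have := heval 0; simp at this; rw [h0] at this; linarith [this]
  have e1 : d + c + b + a = 1 := by have := heval 1; rw [h1] at this; linarith [this]
  have e2 : P.eval (1/2) = d + c / 2 + b / 4 + a / 8 := by rw [heval]; ring
  have e1' : c + b + a = 1 := by linarith
  have key : (1/2 + s/4) - (d + c/2 + b/4 + a/8) = (s/4) * (c + 2*b*r + 3*a*r^2) := by
    rw [hrdef, e0]
    linear_combination (-(1/2 + s/4)) * e1' - (b/12 + a/8 + a*s/48) * hs2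
  have hfin : 0 ≤ (s/4) * (c + 2*b*r + 3*a*r^2) :=
    mul_nonneg (by positivity) hdpos
  rw [e2]
  linarith [key, hfin]
end

section
/- Let a, b, c be real numbers with a + b + c = 1 and suppose the polynomial P(x) = a x³ + b x² + c x is monotone non-decreasing on the closed interval [0,1]. Then -√3/3 ≤ a/2 + b/3 ≤ √3/3. -/
/-- From monotonicity of the cubic on [0,1], its derivative is nonneg at
interior points, proved via symmetric secants. -/
lemma cubic_deriv_nonneg (a b c : ℝ)
    (hmono : MonotoneOn (fun x : ℝ => a * x ^ 3 + b * x ^ 2 + c * x)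
      (Set.Icc (0 : ℝ) 1)) {r : ℝ} (hr0 : 0 < r) (hr1 : r < 1) :
    0 ≤ 3 * a * r ^ 2 + 2 * b * r + c := by
  by_contra hneg
  push_neg at hneg
  set D : ℝ := 3 * a * r ^ 2 + 2 * b * r + c with hD
  have hDneg : D < 0 := hneg
  have hden : (0:ℝ) < 2 * (|a| + 1) := by positivity
  have htpos : (0:ℝ) < -D / (2 * (|a| + 1)) := by
    apply div_pos (by linarith) hden
  set t : ℝ := Real.sqrt (-D / (2 * (|a| + 1))) with ht
  have htp : 0 < t := Real.sqrt_pos.mpr htpos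
  set h : ℝ := min (min r (1 - r)) t with hh
  have hhp : 0 < h := lt_min (lt_min hr0 (by linarith)) htp
  have hhr : h ≤ r := le_trans (min_le_left _ _) (min_le_left _ _)
  have hhr1 : h ≤ 1 - r := le_trans (min_le_left _ _) (min_le_right _ _)
  have hht : h ≤ t := min_le_right _ _
  -- a * h^2 < -D
  have hah : a * h ^ 2 < -D := by
    have h1 : a * h ^ 2 ≤ |a| * h ^ 2 := by
      have := le_abs_self a
      nlinarith [sq_nonneg h]
    have h2 : h ^ 2 ≤ t ^ 2 := by nlinarith
    have h3 : t ^ 2 = -D / (2 * (|a| + 1)) := Real.sq_sqrt (le_of_lt htpos)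
    have h4 : |a| * t ^ 2 < -D := by
      rw [h3]
      rw [div_eq_inv_mul]
      have h5 : |a| < 2 * (|a| + 1) := by
        have := abs_nonneg a; linarith
      calc |a| * ((2 * (|a| + 1))⁻¹ * -D)
          = (|a| / (2 * (|a| + 1))) * -D := by ring
        _ < 1 * -D := by
            apply mul_lt_mul_of_pos_right _ (by linarith)
            rw [div_lt_one hden]; exact h5
        _ = -D := one_mul _
    have h6 : |a| * h ^ 2 ≤ |a| * t ^ 2 :=
      mul_le_mul_of_nonneg_left h2 (abs_nonneg a)
    linarith
  -- monotonicity between r - h and r + h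
  have hmem1 : r - h ∈ Set.Icc (0:ℝ) 1 := ⟨by linarith, by linarith⟩
  have hmem2 : r + h ∈ Set.Icc (0:ℝ) 1 := ⟨by linarith, by linarith⟩
  have hle := hmono hmem1 hmem2 (by linarith)
  simp only at hle
  -- P(r+h) - P(r-h) = 2h * (D + a h^2) < 0, contradiction
  have hid : (a * (r + h) ^ 3 + b * (r + h) ^ 2 + c * (r + h))
      - (a * (r - h) ^ 3 + b * (r - h) ^ 2 + c * (r - h))
      = 2 * h * (D + a * h ^ 2) := by
    rw [hD]; ring
  nlinarith [mul_pos hhp (show (0:ℝ) < -(D + a * h ^ 2) by linarith)]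

/-- if a+b+c = 1 and P(x) = a x³ + b x² + c x is monotone
non-decreasing on [0,1], then -√3/3 ≤ a/2 + b/3 ≤ √3/3. -/
theorem stmt_5 (a b c : ℝ) (habc : a + b + c = 1)
    (hmono : MonotoneOn (fun x : ℝ => a * x ^ 3 + b * x ^ 2 + c * x)
      (Set.Icc (0 : ℝ) 1)) :
    -(Real.sqrt 3 / 3) ≤ a / 2 + b / 3 ∧ a / 2 + b / 3 ≤ Real.sqrt 3 / 3 := by
  set s : ℝ := Real.sqrt 3 with hs
  have hs2 : s ^ 2 = 3 := Real.sq_sqrt (by norm_num)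
  have hs_pos : 0 < s := Real.sqrt_pos.mpr (by norm_num)
  have hs_lt : s < 2 := by nlinarith
  have hs_gt : 1 < s := by nlinarith
  -- r₀ = (3 - s)/6 ∈ (0,1),  r₁ = (3 + s)/6 ∈ (0,1)
  have h0 := cubic_deriv_nonneg a b c hmono
    (r := (3 - s) / 6) (by linarith) (by linarith)
  have h1 := cubic_deriv_nonneg a b c hmono
    (r := (3 + s) / 6) (by linarith) (by linarith)
  have e0 : (s/3) * (3 * a * ((3 - s) / 6) ^ 2 + 2 * b * ((3 - s) / 6) + c)
      = s/3 - (a/2 + b/3) := by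
    linear_combination ((a/36)*s - a/6 - b/9) * hs2 + (s/3) * habc
  have e1 : (s/3) * (3 * a * ((3 + s) / 6) ^ 2 + 2 * b * ((3 + s) / 6) + c)
      = s/3 + (a/2 + b/3) := by
    linear_combination ((a/36)*s + a/6 + b/9) * hs2 + (s/3) * habc
  have k0 := mul_nonneg (by positivity : (0:ℝ) ≤ s/3) h0
  have k1 := mul_nonneg (by positivity : (0:ℝ) ≤ s/3) h1
  rw [e0] at k0
  rw [e1] at k1
  constructor <;> linarith
end

section
/- Let a, b, c be real numbers with a + b + c = 1 such that 3aλ² + 2bλ + c ≥ 0 for every λ ∈ [0,1]. Then a/8 + b/4 + c/2 ≤ 1/2 + √3/4. -/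
/-- if a+b+c = 1 and 3aλ² + 2bλ + c ≥ 0 on [0,1],
then a/8 + b/4 + c/2 ≤ 1/2 + √3/4. -/
theorem stmt_6 (a b c : ℝ) (habc : a + b + c = 1)
    (hpos : ∀ l ∈ Set.Icc (0 : ℝ) 1, 3 * a * l ^ 2 + 2 * b * l + c ≥ 0) :
    a / 8 + b / 4 + c / 2 ≤ 1 / 2 + Real.sqrt 3 / 4 := by
  have h3 : Real.sqrt 3 ^ 2 = 3 := Real.sq_sqrt (by norm_num)
  have h3n : (0:ℝ) ≤ Real.sqrt 3 := Real.sqrt_nonneg 3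
  have h3le : Real.sqrt 3 ≤ 2 := by nlinarith
  have hp := hpos ((3 + Real.sqrt 3) / 6) ⟨by positivity, by nlinarith⟩
  have key : a / 8 + b / 4 + c / 2 +
      Real.sqrt 3 / 4 * (3 * a * ((3 + Real.sqrt 3) / 6) ^ 2
        + 2 * b * ((3 + Real.sqrt 3) / 6) + c) = 1 / 2 + Real.sqrt 3 / 4 := by
    linear_combination (a * (Real.sqrt 3 + 6) / 48 + b / 12) * h3
      + (1 / 2 + Real.sqrt 3 / 4) * habc
  have hmul := mul_nonneg (show (0:ℝ) ≤ Real.sqrt 3 / 4 by positivity) hp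
  linarith
end

section
/- Let a, b, c be real numbers with a + b + c = 1 such that 3aλ² + 2bλ + c ≥ 0 for every λ ∈ [0,1]. Then a/8 + b/4 + c/2 ≥ 1/2 - √3/4. -/
/-- if a+b+c = 1 and 3aλ² + 2bλ + c ≥ 0 on [0,1],
then a/8 + b/4 + c/2 ≥ 1/2 - √3/4. -/
theorem stmt_7 (a b c : ℝ) (habc : a + b + c = 1)
    (hpos : ∀ l ∈ Set.Icc (0 : ℝ) 1, 3 * a * l ^ 2 + 2 * b * l + c ≥ 0) :
    a / 8 + b / 4 + c / 2 ≥ 1 / 2 - Real.sqrt 3 / 4 := by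
  have hs : Real.sqrt 3 ^ 2 = 3 := Real.sq_sqrt (by norm_num)
  have hs0 : (0:ℝ) ≤ Real.sqrt 3 := Real.sqrt_nonneg 3
  have hs2 : Real.sqrt 3 ≤ 2 := by nlinarith
  have h := hpos ((3 - Real.sqrt 3)/6) ⟨by nlinarith, by nlinarith⟩
  have key : 3 * a * ((3 - Real.sqrt 3)/6) ^ 2 = a * (2 - Real.sqrt 3) / 2 := by
    linear_combination (a / 12) * hs
  rw [key] at h
  nlinarith [h, hs, mul_nonneg hs0 h]
end

section
/- Let x₀ < x₁ and y₀ ≤ y₁ be real numbers, let β = 1/2 - √3/4, and let P be a real polynomial of degree at most 3 that is monotone non-decreasing on the closed interval [x₀, x₁] with P(x₀) = y₀ and P(x₁) = y₁. Then y₀ + β·(y₁ - y₀) ≤ P((x₀ + x₁)/2) ≤ y₁ - β·(y₁ - y₀). -/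
set_option maxHeartbeats 1000000 in
/-- scaled version of the midpoint bound: for a degree-≤3 polynomial
monotone non-decreasing on [x₀,x₁] with P(x₀)=y₀ ≤ y₁=P(x₁), the value at the
midpoint is between y₀ + β(y₁-y₀) and y₁ - β(y₁-y₀), where β = 1/2 - √3/4. -/
theorem stmt_8 (x₀ x₁ y₀ y₁ : ℝ) (hx : x₀ < x₁) (hy : y₀ ≤ y₁)
    (β : ℝ) (hβ : β = 1 / 2 - Real.sqrt 3 / 4)
    (P : Polynomial ℝ) (hdeg : P.degree ≤ 3)
    (h0 : P.eval x₀ = y₀) (h1 : P.eval x₁ = y₁)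
    (hmono : MonotoneOn (fun x => P.eval x) (Set.Icc x₀ x₁)) :
    y₀ + β * (y₁ - y₀) ≤ P.eval ((x₀ + x₁) / 2) ∧
      P.eval ((x₀ + x₁) / 2) ≤ y₁ - β * (y₁ - y₀) := by
  subst h0 h1 hβ
  set s : ℝ := Real.sqrt 3 with hsdef
  have hs : s ^ 2 = 3 := Real.sq_sqrt (by norm_num)
  have hs0 : 0 ≤ s := Real.sqrt_nonneg 3
  have hs1 : 1 ≤ s := by nlinarith
  have hs2 : s ≤ 2 := by nlinarith
  have hd4 : P.natDegree < 4 := by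
    have h3 : P.natDegree ≤ 3 := Polynomial.natDegree_le_of_degree_le hdeg
    omega
  set a := P.coeff 0 with ha
  set b := P.coeff 1 with hb
  set c := P.coeff 2 with hc
  set d := P.coeff 3 with hd
  have hP : ∀ x : ℝ, P.eval x = a + b * x + c * x ^ 2 + d * x ^ 3 := by
    intro x
    rw [Polynomial.eval_eq_sum_range' hd4]
    simp only [Finset.sum_range_succ, Finset.sum_range_zero]
    ring
  -- the derivative of P is nonnegative at interior points
  have key : ∀ t ∈ Set.Ioo x₀ x₁, 0 ≤ b + 2 * c * t + 3 * d * t ^ 2 := by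
    intro t ht
    have hfun : (fun x : ℝ => P.eval x) = fun x : ℝ => a + b * x + c * x ^ 2 + d * x ^ 3 :=
      funext hP
    have hD : HasDerivAt (fun x : ℝ => P.eval x) (b + 2 * c * t + 3 * d * t ^ 2) t := by
      rw [hfun]
      have h1' : HasDerivAt (fun x : ℝ => a + b * x + c * x ^ 2 + d * x ^ 3)
          (0 + b * 1 + c * (↑(2:ℕ) * t ^ (2 - 1)) + d * (↑(3:ℕ) * t ^ (3 - 1))) t := by
        exact (((hasDerivAt_const t a).add ((hasDerivAt_id t).const_mul b)).add
          ((hasDerivAt_pow 2 t).const_mul c)).add ((hasDerivAt_pow 3 t).const_mul d)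
      convert h1' using 1
      push_cast
      ring
    have hDW := (hD.hasDerivWithinAt (s := Set.Ioi t))
    rw [hasDerivWithinAt_iff_tendsto_slope] at hDW
    have hsub : Set.Ioi t \ {t} = Set.Ioi t := Set.diff_singleton_eq_self (by simp)
    rw [hsub] at hDW
    have hev : ∀ᶠ y in nhdsWithin t (Set.Ioi t), 0 ≤ slope (fun x => P.eval x) t y := by
      have hIoo : Set.Ioo t x₁ ∈ nhdsWithin t (Set.Ioi t) := Ioo_mem_nhdsGT_of_mem ⟨le_refl t, ht.2⟩
      filter_upwards [hIoo] with y hy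
      have h1' : P.eval t ≤ P.eval y := by
        apply hmono ⟨le_of_lt ht.1, le_of_lt ht.2⟩ ⟨le_trans (le_of_lt ht.1) (le_of_lt hy.1),
          le_of_lt hy.2⟩ (le_of_lt hy.1)
      rw [slope_def_field]
      have : (0:ℝ) < y - t := by linarith [hy.1]
      exact div_nonneg (by linarith) (le_of_lt this)
    exact ge_of_tendsto hDW hev
  set m : ℝ := (x₀ + x₁) / 2 with hm
  set h : ℝ := (x₁ - x₀) / 2 with hh
  have hhpos : 0 < h := by rw [hh]; linarith
  have hx0 : x₀ = m - h := by rw [hm, hh]; ring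
  have hx1 : x₁ = m + h := by rw [hm, hh]; ring
  have hu : x₀ < m - h * s / 3 ∧ m - h * s / 3 < x₁ := by
    constructor
    · rw [hx0]; nlinarith
    · rw [hx1]; nlinarith
  have hv : x₀ < m + h * s / 3 ∧ m + h * s / 3 < x₁ := by
    constructor
    · rw [hx0]; nlinarith
    · rw [hx1]; nlinarith
  clear_value a b c d m h
  have ku := key (m - h * s / 3) ⟨hu.1, hu.2⟩
  have kv := key (m + h * s / 3) ⟨hv.1, hv.2⟩
  have E1 : P.eval m - P.eval x₀ - (1 / 2 - s / 4) * (P.eval x₁ - P.eval x₀) =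
      (s / 2) * h * (b + 2 * c * (m - h * s / 3) + 3 * d * (m - h * s / 3) ^ 2) := by
    rw [hP, hP, hP, hx0, hx1]
    linear_combination (c * h ^ 2 / 3 + d * m * h ^ 2 - s * d * h ^ 3 / 6) * hs
  have E2 : P.eval x₁ - P.eval m - (1 / 2 - s / 4) * (P.eval x₁ - P.eval x₀) =
      (s / 2) * h * (b + 2 * c * (m + h * s / 3) + 3 * d * (m + h * s / 3) ^ 2) := by
    rw [hP, hP, hP, hx0, hx1]
    linear_combination (-(c * h ^ 2) / 3 - d * m * h ^ 2 - s * d * h ^ 3 / 6) * hs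
  have hsh : 0 ≤ s / 2 * h := by positivity
  constructor
  · nlinarith [mul_nonneg hsh ku, E1]
  · nlinarith [mul_nonneg hsh kv, E2]
end

section
/- Let x₀ < x₁ and y₀ ≤ y₁ be real numbers, let β = 1/2 - √3/4, let m = (x₀ + x₁)/2, and let P be a real polynomial of degree at most 3 that is monotone non-decreasing on the closed interval [x₀, x₁] with P(x₀) = y₀ and P(x₁) = y₁. Then both P(m) - y₀ ≤ (1 - β)·(y₁ - y₀) and y₁ - P(m) ≤ (1 - β)·(y₁ - y₀); that is, splitting the interval at its midpoint divides the total mass y₁ - y₀ into two parts, each smaller than the original by at least the factor 1 - β. -/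
open Polynomial Set Filter Topology

lemma deriv_nn_of_monotoneOn (P : Polynomial ℝ) {a b s : ℝ}
    (ha : a ≤ s) (hb : s < b)
    (hmono : MonotoneOn (fun x => P.eval x) (Set.Icc a b)) :
    0 ≤ (Polynomial.derivative P).eval s := by
  have ht := (P.hasDerivAt s)
  rw [hasDerivAt_iff_tendsto_slope] at ht
  have ht2 : Tendsto (slope (fun x => P.eval x) s) (𝓝[>] s)
      (𝓝 ((Polynomial.derivative P).eval s)) :=
    ht.mono_left (nhdsWithin_mono s (fun y hy => ne_of_gt hy))
  refine ge_of_tendsto ht2 ?_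
  filter_upwards [Ioo_mem_nhdsGT_of_mem (Set.left_mem_Ico.2 hb)] with y hy
  have hsy : s < y := hy.1
  have hnum : P.eval s ≤ P.eval y :=
    hmono ⟨ha, hb.le⟩ ⟨ha.trans hsy.le, hy.2.le⟩ hsy.le
  rw [slope_def_field]
  have := div_nonneg (sub_nonneg.2 hnum) (sub_nonneg.2 hsy.le)
  simpa [div_eq_inv_mul] using this

/-- splitting at the midpoint divides the mass y₁ - y₀ into two
parts, each at most a (1-β) fraction of the total, where β = 1/2 - √3/4. -/
theorem stmt_9 (x₀ x₁ y₀ y₁ : ℝ) (hx : x₀ < x₁) (hy : y₀ ≤ y₁)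
    (β : ℝ) (hβ : β = 1 / 2 - Real.sqrt 3 / 4)
    (m : ℝ) (hm : m = (x₀ + x₁) / 2)
    (P : Polynomial ℝ) (hdeg : P.degree ≤ 3)
    (h0 : P.eval x₀ = y₀) (h1 : P.eval x₁ = y₁)
    (hmono : MonotoneOn (fun x => P.eval x) (Set.Icc x₀ x₁)) :
    P.eval m - y₀ ≤ (1 - β) * (y₁ - y₀) ∧
      y₁ - P.eval m ≤ (1 - β) * (y₁ - y₀) := by
  set r := Real.sqrt 3 with hr
  have hr3 : r ^ 2 = 3 := Real.sq_sqrt (by norm_num)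
  have hr1 : 1 < r := by nlinarith [Real.sqrt_nonneg 3]
  have hh : (0:ℝ) < (x₁ - x₀) / 2 := by linarith
  set h := (x₁ - x₀) / 2 with hhdef
  -- the two special points
  have hhr : h / r < h := by
    rw [div_lt_iff₀ (by linarith)]; nlinarith
  have hhrpos : 0 < h / r := div_pos hh (by linarith)
  have hsm : x₀ < m - h / r ∧ m - h / r < x₁ := by
    exact ⟨by nlinarith, by nlinarith⟩
  have hsp : x₀ < m + h / r ∧ m + h / r < x₁ := by
    exact ⟨by nlinarith, by nlinarith⟩
  have hdm : 0 ≤ (Polynomial.derivative P).eval (m - h / r) :=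
    deriv_nn_of_monotoneOn P hsm.1.le hsm.2 hmono
  have hdp : 0 ≤ (Polynomial.derivative P).eval (m + h / r) :=
    deriv_nn_of_monotoneOn P hsp.1.le hsp.2 hmono
  -- expand evaluations via coefficients
  have hnd : P.natDegree < 4 :=
    Nat.lt_succ_of_le (Polynomial.natDegree_le_iff_degree_le.2 hdeg)
  have hnd' : (Polynomial.derivative P).natDegree < 3 := by
    have := Polynomial.natDegree_derivative_le P
    omega
  have heval : ∀ x : ℝ, P.eval x =
      P.coeff 0 + P.coeff 1 * x + P.coeff 2 * x ^ 2 + P.coeff 3 * x ^ 3 := by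
    intro x
    rw [Polynomial.eval_eq_sum_range' hnd]
    simp [Finset.sum_range_succ]
    try ring
  have hdeval : ∀ x : ℝ, (Polynomial.derivative P).eval x =
      P.coeff 1 + 2 * P.coeff 2 * x + 3 * P.coeff 3 * x ^ 2 := by
    intro x
    rw [Polynomial.eval_eq_sum_range' hnd']
    simp [Finset.sum_range_succ, Polynomial.coeff_derivative]
    try ring
  rw [hdeval] at hdm hdp
  have hm' := heval m
  have hrpos : (0:ℝ) < r := by linarith
  have hq : h / r = h * r / 3 := by
    rw [div_eq_iff (by linarith : r ≠ 0)]
    linear_combination (-h/3) * hr3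
  rw [hq] at hdm hdp
  rw [heval] at h0 h1
  have keym : P.eval m - y₀ - β * (y₁ - y₀) =
      (r/2) * h * (P.coeff 1 + 2 * P.coeff 2 * (m - h*r/3)
        + 3 * P.coeff 3 * (m - h*r/3) ^ 2) := by
    rw [hm', hβ, ← h0, ← h1, hm, hhdef]
    linear_combination (((x₁-x₀)/2) * (P.coeff 2 * ((x₁-x₀)/2) / 3
      + P.coeff 3 * (((x₀+x₁)/2) * ((x₁-x₀)/2) - r * ((x₁-x₀)/2) ^ 2 / 6))) * hr3
  have keyp : y₁ - P.eval m - β * (y₁ - y₀) =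
      (r/2) * h * (P.coeff 1 + 2 * P.coeff 2 * (m + h*r/3)
        + 3 * P.coeff 3 * (m + h*r/3) ^ 2) := by
    rw [hm', hβ, ← h0, ← h1, hm, hhdef]
    linear_combination (-((x₁-x₀)/2) * (P.coeff 2 * ((x₁-x₀)/2) / 3
      + P.coeff 3 * (((x₀+x₁)/2) * ((x₁-x₀)/2) + r * ((x₁-x₀)/2) ^ 2 / 6))) * hr3
  have nnm : 0 ≤ P.eval m - y₀ - β * (y₁ - y₀) := by
    rw [keym]; exact mul_nonneg (mul_nonneg (by linarith) hh.le) hdm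
  have nnp : 0 ≤ y₁ - P.eval m - β * (y₁ - y₀) := by
    rw [keyp]; exact mul_nonneg (mul_nonneg (by linarith) hh.le) hdp
  constructor <;> linarith
end

section
/- Let β, M, b, b₁, b₂ be real numbers with 0 < β < 1/4, M > 0, b > M, b₁ ≥ 0, b₂ ≥ 0, b₁ + b₂ = b, b₁ ≤ (1 - β)·b, and b₂ ≤ (1 - β)·b. Then, with T = (3/4)·M, max(0, b₁ - T) + max(0, b₂ - T) ≤ (b - T) - β·M; that is, replacing a bucket of counter b exceeding M by the two split parts b₁, b₂ decreases the potential Σᵢ max(0, bᵢ - (3/4)M) by at least β·M. -/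
/-- splitting a bucket of counter b > M into parts b₁, b₂, each at
most (1-β)·b, decreases the potential Σ max(0, bᵢ - (3/4)M) by at least β·M. -/
theorem stmt_11 (β M b b₁ b₂ : ℝ) (hβ0 : 0 < β) (hβ1 : β < 1 / 4)
    (hM : 0 < M) (hb : M < b) (hb₁ : 0 ≤ b₁) (hb₂ : 0 ≤ b₂)
    (hsum : b₁ + b₂ = b) (h₁ : b₁ ≤ (1 - β) * b) (h₂ : b₂ ≤ (1 - β) * b) :
    max 0 (b₁ - 3 / 4 * M) + max 0 (b₂ - 3 / 4 * M)
      ≤ (b - 3 / 4 * M) - β * M := by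
  rcases max_cases 0 (b₁ - 3 / 4 * M) with ⟨e1, h1⟩ | ⟨e1, h1⟩ <;>
  rcases max_cases 0 (b₂ - 3 / 4 * M) with ⟨e2, h2⟩ | ⟨e2, h2⟩ <;>
  rw [e1, e2] <;> nlinarith
end

section
/- Let n ≥ k ≥ 2 be natural numbers, let a : {0, 1, …, n-1} → ℝ be a monotone non-decreasing sequence, let g = ⌊(n-1)/(k-1)⌋, and suppose every real value v is attained by a at most g indices, i.e., |{j : a(j) = v}| ≤ g for all v. Then the selected values a(⌊i·(n-1)/(k-1)⌋) for i = 0, 1, …, k-1 are strictly increasing in i; in particular the k selected thresholds are pairwise distinct. -/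
/-- if a is a sorted sequence of n reals in which no value occurs
more than g = ⌊(n-1)/(k-1)⌋ times, then the k thresholds a(⌊i(n-1)/(k-1)⌋),
i = 0,…,k-1, are strictly increasing, hence pairwise distinct. -/
theorem stmt_13 (n k : ℕ) (hk : 2 ≤ k) (hn : k ≤ n) (a : ℕ → ℝ)
    (hmono : ∀ i j, i ≤ j → j < n → a i ≤ a j)
    (hfreq : ∀ v : ℝ, ((Finset.range n).filter (fun j => a j = v)).card
      ≤ (n - 1) / (k - 1)) :
    ∀ i₁ i₂, i₁ < i₂ → i₂ < k →
      a (i₁ * (n - 1) / (k - 1)) < a (i₂ * (n - 1) / (k - 1)) := by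
  set m := n - 1 with hm
  set c := k - 1 with hc
  have hc1 : 1 ≤ c := by omega
  have hn2 : 2 ≤ n := le_trans hk hn
  have hmn : m < n := by omega
  -- key step lemma
  have step : ∀ i, i + 1 ≤ c → a (i * m / c) < a ((i + 1) * m / c) := by
    intro i hi
    have hqm0 : (i + 1) * m / c ≤ m := by
      calc (i + 1) * m / c ≤ c * m / c := Nat.div_le_div_right (Nat.mul_le_mul_right m hi)
        _ = m := by rw [Nat.mul_div_cancel_left m (by omega)]
    have hpq0 : i * m / c + m / c ≤ (i + 1) * m / c := by
      have h : i * m / c + m / c ≤ (i * m + m) / c := by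
        rw [Nat.le_div_iff_mul_le (by omega : 0 < c)]
        have h1 : (i * m / c) * c ≤ i * m := Nat.div_mul_le_self _ _
        have h2 : (m / c) * c ≤ m := Nat.div_mul_le_self _ _
        calc (i * m / c + m / c) * c = (i * m / c) * c + (m / c) * c := by ring
          _ ≤ i * m + m := by omega
      calc i * m / c + m / c ≤ (i * m + m) / c := h
        _ = (i + 1) * m / c := by ring_nf
    obtain ⟨g, p, q, hg, hpq, hqm, hp, hq⟩ :
        ∃ g p q, m / c = g ∧ p + g ≤ q ∧ q ≤ m ∧ i * m / c = p ∧ (i + 1) * m / c = q :=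
      ⟨_, _, _, rfl, hpq0, hqm0, rfl, rfl⟩
    rw [hp, hq]
    have hqn : q < n := by omega
    have hpn : p < n := by omega
    by_contra hcon
    push_neg at hcon
    have heq : a p = a q := le_antisymm (hmono p q (by omega) hqn) hcon
    have hsub : Finset.Icc p q ⊆ (Finset.range n).filter (fun j => a j = a p) := by
      intro j hj
      simp only [Finset.mem_Icc] at hj
      simp only [Finset.mem_filter, Finset.mem_range]
      refine ⟨by omega, le_antisymm ?_ ?_⟩
      · rw [heq]; exact hmono j q hj.2 hqn
      · exact hmono p j hj.1 (by omega)
    have hcard : q - p + 1 ≤ g := by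
      calc q - p + 1 = (Finset.Icc p q).card := by
            rw [Nat.card_Icc]; omega
        _ ≤ _ := Finset.card_le_card hsub
        _ ≤ g := by rw [← hg]; exact hfreq (a p)
    omega
  intro i₁ i₂ h12 h2k
  induction i₂ with
  | zero => omega
  | succ j ih =>
    have hjc : j + 1 ≤ c := by omega
    rcases Nat.lt_or_ge i₁ j with hlt | hge
    · by_cases hj0 : j = 0
      · omega
      · calc a (i₁ * m / c) < a (j * m / c) := ih hlt (by omega)
          _ < a ((j + 1) * m / c) := step j hjc
    · have : i₁ = j := by omega
      subst this
      exact step i₁ hjc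
end
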